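/- Let C be a skeletally small k-linear category with center Z(C) = k, and suppose every element of k has a d-th root. If (F, c) and (F, c') are two compatible pairs of order d with the same underlying autoequivalence F, then (F, c) and (F, c') are isomorphic as compatible pairs. -/

import Mathlib

open CategoryTheory

universe v u

variable {C : Type u} [Category.{v} C]

/-- Iterated composition `F^n` of an endofunctor (with `F` applied innermost first). -/
def fpow (F : C ⥤ C) : ℕ → C ⥤ C
  | 0 => 𝟭 C
  | n + 1 => F ⋙ fpow F n

lemma fpow_comp (F : C ⥤ C) (i j : ℕ) : fpow F j ⋙ fpow F i = fpow F (i + j) := by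
  induction j with
  | zero => exact Functor.id_comp _
  | succ j ih =>
    show (F ⋙ fpow F j) ⋙ fpow F i = fpow F (i + (j + 1))
    rw [Functor.assoc, ih]
    rfl

lemma fpow_obj_comm (F : C ⥤ C) (n : ℕ) (X : C) :
    F.obj ((fpow F n).obj X) = (fpow F n).obj (F.obj X) := by
  induction n generalizing X with
  | zero => rfl
  | succ n ih => exact ih (F.obj X)

/-- A *compatible pair of order `d`*: an endofunctor `F` with a natural isomorphism
`c : F^d ≅ 𝟭 C` satisfying `F ◁ c = c ▷ F` (componentwise). -/
def IsCompatiblePair (d : ℕ) (F : C ⥤ C) (c : fpow F d ≅ 𝟭 C) : Prop :=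
  ∀ X : C, F.map (c.hom.app X) = eqToHom (fpow_obj_comm F d X) ≫ c.hom.app (F.obj X)

/-- The structural isomorphisms of the `C_d`-action induced by a compatible pair `(F, c)`
of order `d`: the identity when `i + j < d`, and `F^{i+j-d} ◁ c` otherwise. -/
noncomputable def inducedEps (d : ℕ) [NeZero d] (F : C ⥤ C) (c : fpow F d ≅ 𝟭 C)
    (x y : Multiplicative (ZMod d)) :
    fpow F (ZMod.val (Multiplicative.toAdd y)) ⋙ fpow F (ZMod.val (Multiplicative.toAdd x)) ≅
      fpow F (ZMod.val (Multiplicative.toAdd (x * y))) :=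
  if h : ZMod.val (Multiplicative.toAdd x) + ZMod.val (Multiplicative.toAdd y) < d then
    eqToIso (by
      rw [fpow_comp]
      congr 1
      rw [toAdd_mul, ZMod.val_add, Nat.mod_eq_of_lt h])
  else
    eqToIso (by
      rw [fpow_comp, fpow_comp]
      congr 1
      have hx := ZMod.val_lt (Multiplicative.toAdd x)
      have hy := ZMod.val_lt (Multiplicative.toAdd y)
      omega) ≪≫
    Functor.isoWhiskerRight c
      (fpow F (ZMod.val (Multiplicative.toAdd x) + ZMod.val (Multiplicative.toAdd y) - d)) ≪≫
    eqToIso (by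
      rw [Functor.id_comp]
      congr 1
      have hx := ZMod.val_lt (Multiplicative.toAdd x)
      have hy := ZMod.val_lt (Multiplicative.toAdd y)
      rw [toAdd_mul, ZMod.val_add,
        Nat.mod_eq_sub_mod (by omega), Nat.mod_eq_of_lt (by omega)])

/-- The natural isomorphism `aⁱ : Fⁱ ≅ F'ⁱ` induced by `a : F ≅ F'`. -/
def powIso {F F' : C ⥤ C} (a : F ≅ F') : ∀ i : ℕ, fpow F i ≅ fpow F' i
  | 0 => Iso.refl _
  | i + 1 => Functor.isoWhiskerLeft F (powIso a i) ≪≫ Functor.isoWhiskerRight a (fpow F' i)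

lemma fpow_map_smul (k : Type*) [Field k] [Preadditive C] [CategoryTheory.Linear k C]
    (F : C ⥤ C) [F.Additive] [F.Linear k] (i : ℕ) {X Y : C} (b : k) (f : X ⟶ Y) :
    (fpow F i).map (b • f) = b • (fpow F i).map f := by
  induction i generalizing X Y with
  | zero => rfl
  | succ i ih =>
    show (fpow F i).map (F.map (b • f)) = b • (fpow F i).map (F.map f)
    rw [F.map_smul, ih]

lemma powIso_smul_app (k : Type*) [Field k] [Preadditive C] [CategoryTheory.Linear k C]
    (F : C ⥤ C) [F.Additive] [F.Linear k] (a : F ≅ F) (b : k)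
    (ha : ∀ X, a.hom.app X = b • 𝟙 (F.obj X)) (i : ℕ) (X : C) :
    (powIso a i).hom.app X = b ^ i • 𝟙 ((fpow F i).obj X) := by
  induction i generalizing X with
  | zero => simp [powIso]
  | succ i ih =>
    have : (powIso a (i + 1)).hom.app X =
        (powIso a i).hom.app (F.obj X) ≫ (fpow F i).map (a.hom.app X) := rfl
    rw [this, ha, ih, fpow_map_smul k F i]
    simp only [CategoryTheory.Functor.map_id, Linear.smul_comp, Linear.comp_smul,
      Category.comp_id, smul_smul, pow_succ]
    rw [mul_comm]
    rfl

/-- Let `C` be a (skeletally small) `k`-linear category whose center is `k`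
(every natural endotransformation of the identity functor is a scalar), and suppose every
element of `k` has a `d`-th root.  If `(F, c)` and `(F, c')` are two compatible pairs of
order `d` with the same underlying `k`-linear autoequivalence `F`, then `(F, c)` and
`(F, c')` are isomorphic as compatible pairs: there is `a : F ≅ F` with `c = c' ∘ a^d`. -/
theorem compatPairs_same_functor_isomorphic (k : Type*) [Field k] [Preadditive C]
    [CategoryTheory.Linear k C]
    (hZ : ∀ η : 𝟭 C ⟶ 𝟭 C, ∃ a : k, ∀ X : C, η.app X = a • 𝟙 X)
    (d : ℕ) (hd : 2 ≤ d) (hroot : ∀ a : k, ∃ b : k, b ^ d = a)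
    (F : C ⥤ C) (hF : F.IsEquivalence) [F.Additive] [F.Linear k]
    (c c' : fpow F d ≅ 𝟭 C)
    (hc : IsCompatiblePair d F c) (hc' : IsCompatiblePair d F c') :
    ∃ a : F ≅ F, c.hom = (powIso a d).hom ≫ c'.hom := by
  obtain ⟨l, hl⟩ := hZ (c'.symm ≪≫ c).hom
  by_cases hl0 : l = 0
  · -- all identities are zero, hence all morphisms are zero
    have hzero : ∀ X : C, 𝟙 X = (0 : X ⟶ X) := by
      intro X
      have h1 := Iso.hom_inv_id_app (c'.symm ≪≫ c) X
      rw [hl X, hl0, zero_smul, Limits.zero_comp] at h1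
      exact h1.symm
    have hall : ∀ {X Y : C} (f : X ⟶ Y), f = 0 := by
      intro X Y f
      rw [← Category.comp_id f, hzero Y, Limits.comp_zero]
    refine ⟨Iso.refl F, ?_⟩
    ext X
    rw [hall (c.hom.app X), hall (((powIso (Iso.refl F) d).hom ≫ c'.hom).app X)]
  · obtain ⟨b, hb⟩ := hroot l
    have hbne : b ≠ 0 := by
      intro h; apply hl0; rw [← hb, h, zero_pow (by omega)]
    refine ⟨⟨b • 𝟙 F, b⁻¹ • 𝟙 F, ?_, ?_⟩, ?_⟩
    · ext X
      simp [smul_smul, mul_inv_cancel₀ hbne, inv_mul_cancel₀ hbne]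
    · ext X
      simp [smul_smul, mul_inv_cancel₀ hbne, inv_mul_cancel₀ hbne]
    · ext X
      have ha : ∀ X, ((b • 𝟙 F : F ⟶ F)).app X = b • 𝟙 (F.obj X) := by
        intro X; simp
      rw [NatTrans.comp_app,
        powIso_smul_app k F ⟨b • 𝟙 F, b⁻¹ • 𝟙 F, by ext X; simp [smul_smul, mul_inv_cancel₀ hbne, inv_mul_cancel₀ hbne],
          by ext X; simp [smul_smul, mul_inv_cancel₀ hbne, inv_mul_cancel₀ hbne]⟩ b ha d X]
      have h2 := hl X
      simp only [Iso.trans_hom, Iso.symm_hom, NatTrans.comp_app] at h2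
      have h3 : c.hom.app X = c'.hom.app X ≫ (l • 𝟙 X) := by
        rw [← h2, ← Category.assoc, Iso.hom_inv_id_app, Category.id_comp]
      rw [h3, hb]
      simp [Linear.smul_comp, Linear.comp_smul]
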